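/- Let d ≥ 1 be an integer, δ > 0 and k ∈ {0,1,2}. For x ∈ ℝ^d, set c(x) = e^{−δ/2 − |x|²/4}, U_k(x) = 2 cos(arccos(c(x)) + 2kπ/3), Q(x) = 4 e^{−3δ/2 − 3|x|²/4} − 3 e^{−δ/2 − |x|²/4}, and define u_k : ℝ × ℝ^d → ℂ by u_k(t,x) = U_k(x) e^{−3it}. Then for every (t,x), the map t ↦ u_k(t,x) is differentiable and i ∂_t u_k(t,x) = |u_k(t,x)|² u_k(t,x) − 2 Q(x) e^{−3it}; that is, u_k solves the forced cubic equation i ∂_t u = |u|² u − f with f(t,x) = 2Q(x) e^{−3it} and no Laplacian term (ε = 0). -/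

import Mathlib

/-- The profile `U_k(x) = 2 cos(arccos(e^{-δ/2-|x|²/4}) + 2kπ/3)`. -/
noncomputable def Uk (d : ℕ) (δ : ℝ) (k : ℕ) (x : EuclideanSpace ℝ (Fin d)) : ℝ :=
  2 * Real.cos (Real.arccos (Real.exp (-δ / 2 - ‖x‖ ^ 2 / 4)) + 2 * k * Real.pi / 3)

/-- The forcing profile `Q(x) = 4 e^{-3δ/2-3|x|²/4} - 3 e^{-δ/2-|x|²/4}`. -/
noncomputable def Qprof (d : ℕ) (δ : ℝ) (x : EuclideanSpace ℝ (Fin d)) : ℝ :=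
  4 * Real.exp (-3 * δ / 2 - 3 * ‖x‖ ^ 2 / 4) - 3 * Real.exp (-δ / 2 - ‖x‖ ^ 2 / 4)

/-- `u_k(t,x) = U_k(x) e^{-3it}`. -/
noncomputable def uk (d : ℕ) (δ : ℝ) (k : ℕ) (t : ℝ) (x : EuclideanSpace ℝ (Fin d)) : ℂ :=
  (Uk d δ k x : ℂ) * Complex.exp (-3 * Complex.I * (t : ℂ))

lemma Uk_cube (d : ℕ) (δ : ℝ) (hδ : 0 < δ) (k : ℕ) (x : EuclideanSpace ℝ (Fin d)) :
    (Uk d δ k x) ^ 3 = 3 * Uk d δ k x + 2 * Qprof d δ x := by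
  set a : ℝ := -δ / 2 - ‖x‖ ^ 2 / 4 with ha
  have hc1 : Real.exp a ≤ 1 := by
    rw [Real.exp_le_one_iff, ha]
    nlinarith [sq_nonneg ‖x‖, hδ]
  have hcm1 : -1 ≤ Real.exp a := le_of_lt (lt_of_lt_of_le neg_one_lt_zero (Real.exp_pos a).le)
  have hcos : Real.cos (Real.arccos (Real.exp a)) = Real.exp a := Real.cos_arccos hcm1 hc1
  set θ : ℝ := Real.arccos (Real.exp a) + 2 * k * Real.pi / 3 with hθ
  have h3θ : Real.cos (3 * θ) = Real.cos (3 * Real.arccos (Real.exp a)) := by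
    have : 3 * θ = 3 * Real.arccos (Real.exp a) + k * (2 * Real.pi) := by rw [hθ]; ring
    rw [this, Real.cos_add_nat_mul_two_pi]
  have h1 : Real.cos (3 * θ) = 4 * Real.cos θ ^ 3 - 3 * Real.cos θ := Real.cos_three_mul θ
  have h2 : Real.cos (3 * Real.arccos (Real.exp a)) =
      4 * Real.exp a ^ 3 - 3 * Real.exp a := by
    rw [Real.cos_three_mul, hcos]
  have hexp3 : Real.exp (-3 * δ / 2 - 3 * ‖x‖ ^ 2 / 4) = Real.exp a ^ 3 := by
    rw [ha, ← Real.exp_nat_mul]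
    push_cast
    ring_nf
  have hU : Uk d δ k x = 2 * Real.cos θ := rfl
  have hQ : Qprof d δ x = 4 * Real.exp a ^ 3 - 3 * Real.exp a := by
    rw [Qprof, hexp3, ha]
  rw [hU, hQ]
  nlinarith [h1, h2, h3θ]

theorem stmt_14 (d : ℕ) (hd : 1 ≤ d) (δ : ℝ) (hδ : 0 < δ) (k : ℕ) (hk : k ≤ 2)
    (t : ℝ) (x : EuclideanSpace ℝ (Fin d)) :
    DifferentiableAt ℝ (fun s : ℝ => uk d δ k s x) t ∧
    Complex.I * deriv (fun s : ℝ => uk d δ k s x) t =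
      ((‖uk d δ k t x‖ : ℂ)) ^ 2 * uk d δ k t x -
        2 * (Qprof d δ x : ℂ) * Complex.exp (-3 * Complex.I * (t : ℂ)) := by
  set U : ℝ := Uk d δ k x with hU
  set E : ℂ := Complex.exp (-3 * Complex.I * (t : ℂ)) with hE
  have h1 : HasDerivAt (fun s : ℝ => ((s : ℂ))) 1 t := by
    simpa using (hasDerivAt_id t).ofReal_comp
  have h2 : HasDerivAt (fun s : ℝ => (-3 * Complex.I) * (s : ℂ)) (-3 * Complex.I) t := by
    simpa using h1.const_mul (-3 * Complex.I)
  have h3 := h2.cexp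
  have h4 : HasDerivAt (fun s : ℝ => uk d δ k s x) ((U : ℂ) * (E * (-3 * Complex.I))) t := by
    simpa [uk, hE, mul_comm] using h3.const_mul (U : ℂ)
  refine ⟨h4.differentiableAt, ?_⟩
  rw [h4.deriv]
  have habsE : ‖E‖ = 1 := by
    rw [hE, Complex.norm_exp]
    simp
  have habs : ‖uk d δ k t x‖ = |U| := by
    rw [uk]
    rw [norm_mul, Complex.norm_real, Real.norm_eq_abs, ← hE, habsE, mul_one, hU]
  rw [habs]
  have hsq : ((|U| : ℝ) : ℂ) ^ 2 = ((U : ℂ)) ^ 2 := by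
    norm_cast
    exact sq_abs U
  rw [hsq]
  have hcube : ((U : ℂ)) ^ 3 = 3 * (U : ℂ) + 2 * ((Qprof d δ x : ℝ) : ℂ) := by
    exact_mod_cast congrArg Complex.ofReal (Uk_cube d δ hδ k x)
  have huk : uk d δ k t x = (U : ℂ) * E := rfl
  rw [huk]
  linear_combination (-E) * hcube + (-3 * (U : ℂ) * E) * Complex.I_sq
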